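/- Let Λ be a commutative local uniserial ring of length n with radical generator p. Every pair (B;A) with B finitely generated, p²A = 0, and soc B ⊆ A is a direct sum of pickets P^ℓ_m = (Λ/(p^ℓ); p^{ℓ−m}Λ/(p^ℓ)) with m ∈ {1,2} and m ≤ ℓ ≤ n. -/

import Mathlib

open Submodule

section PicketHelpers

variable {Λ : Type} [CommRing Λ] [IsLocalRing Λ] {p : Λ} {n : ℕ}

lemma pk_unit (hmax : IsLocalRing.maximalIdeal Λ = Ideal.span {p})
    {a : Λ} (h : a ∉ Ideal.span {p}) : IsUnit a := by
  rw [← hmax] at h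
  exact IsLocalRing.notMem_maximalIdeal.mp h

lemma pk_cases (hmax : IsLocalRing.maximalIdeal Λ = Ideal.span {p})
    (hlen : p ^ n = 0) (x : Λ) :
    x = 0 ∨ ∃ u k, IsUnit u ∧ k < n ∧ x = u * p ^ k := by
  classical
  by_cases hx : x = 0
  · exact Or.inl hx
  right
  rcases Nat.eq_zero_or_pos n with rfl | hn
  · simp only [pow_zero] at hlen
    exact absurd (by rw [← mul_one x, hlen, mul_zero]) hx
  set P : ℕ → Prop := fun j => x ∈ Ideal.span {p ^ j} with hP
  have hP0 : P 0 := by simp [hP, Ideal.span_singleton_one]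
  have hk : P (Nat.findGreatest P n) := Nat.findGreatest_spec (Nat.zero_le n) hP0
  set k := Nat.findGreatest P n with hkdef
  have hkn : k ≤ n := Nat.findGreatest_le n
  have hkn' : k < n := by
    rcases lt_or_eq_of_le hkn with h | h
    · exact h
    · exfalso
      rw [h] at hk
      simp only [hP, hlen] at hk
      rw [Ideal.span_singleton_eq_bot.mpr rfl] at hk
      exact hx (by simpa using hk)
  have hk1 : ¬ P (k + 1) := Nat.findGreatest_is_greatest (Nat.lt_succ_self k) (by omega)
  obtain ⟨c, hc⟩ := Ideal.mem_span_singleton'.mp hk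
  refine ⟨c, k, ?_, hkn', hc.symm⟩
  refine pk_unit hmax fun hcp => hk1 ?_
  obtain ⟨d, hd⟩ := Ideal.mem_span_singleton'.mp hcp
  refine Ideal.mem_span_singleton'.mpr ⟨d, ?_⟩
  rw [← hc, ← hd, pow_succ]
  ring

omit [IsLocalRing Λ] in
lemma pk_pow_ne (hlen : p ^ n = 0) {j : ℕ} (h : p ^ j ≠ 0) : j < n := by
  by_contra hj
  push_neg at hj
  exact h (by rw [← Nat.sub_add_cancel hj, pow_add, hlen, mul_zero])

lemma pk_ideal (hmax : IsLocalRing.maximalIdeal Λ = Ideal.span {p})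
    (hlen : p ^ n = 0) (I : Ideal Λ) :
    ∃ k, k ≤ n ∧ I = Ideal.span {p ^ k} := by
  classical
  have hex : ∃ k, p ^ k ∈ I := ⟨n, by rw [hlen]; exact I.zero_mem⟩
  refine ⟨Nat.find hex, Nat.find_le (by rw [hlen]; exact I.zero_mem), ?_⟩
  apply le_antisymm
  · intro x hx
    rcases pk_cases hmax hlen x with rfl | ⟨u, k, hu, hk, rfl⟩
    · exact zero_mem _
    · have hpk : p ^ k ∈ I := by
        obtain ⟨v, hv⟩ := hu.exists_left_inv
        have hvk : p ^ k = v • (u * p ^ k) := by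
          rw [smul_eq_mul, ← mul_assoc, hv, one_mul]
        rw [hvk]
        exact I.smul_mem v hx
      have hfind : Nat.find hex ≤ k := Nat.find_min' hex hpk
      exact Ideal.mem_span_singleton.mpr ⟨u * p ^ (k - Nat.find hex), by
        rw [← mul_assoc, mul_comm (p ^ Nat.find hex) u, mul_assoc, ← pow_add,
          Nat.add_sub_cancel' hfind]⟩
  · rw [Ideal.span_le, Set.singleton_subset_iff]
    exact Nat.find_spec hex

variable {M : Type} [AddCommGroup M] [Module Λ M]

omit [IsLocalRing Λ] in
lemma pk_smul_unit {u : Λ} (hu : IsUnit u) {x y : M} (h : u • x = y) :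
    ∃ v : Λ, x = v • y := by
  obtain ⟨w, hw⟩ := hu.exists_left_inv
  exact ⟨w, by rw [← h, smul_smul, hw, one_smul]⟩

lemma pk_le_span (hmax : IsLocalRing.maximalIdeal Λ = Ideal.span {p}) (hlen : p ^ n = 0)
    {b : M} {ℓ j : ℕ} (hb : p ^ (ℓ - 1) • b ≠ 0) {r : Λ}
    (h : p ^ j • (r • b) = 0) (hj : j ≤ ℓ) :
    r • b ∈ Submodule.span Λ {p ^ (ℓ - j) • b} := by
  rcases pk_cases hmax hlen r with rfl | ⟨u, k, hu, hk, rfl⟩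
  · rw [zero_smul]; exact zero_mem _
  · have hpk : p ^ (k + j) • b = 0 := by
      have heq : p ^ j • (u * p ^ k) • b = u • (p ^ (k + j) • b) := by
        rw [smul_smul, smul_smul]; congr 1; ring
      rw [heq] at h
      exact (hu.smul_eq_zero).mp h
    have hkj : ℓ ≤ k + j := by
      by_contra hlt
      push_neg at hlt
      apply hb
      have heq2 : p ^ (ℓ - 1) • b = p ^ (ℓ - 1 - (k + j)) • (p ^ (k + j) • b) := by
        rw [smul_smul, ← pow_add, Nat.sub_add_cancel (by omega : k + j ≤ ℓ - 1)]
      rw [heq2, hpk, smul_zero]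
    refine Submodule.mem_span_singleton.mpr ⟨u * p ^ (k - (ℓ - j)), ?_⟩
    rw [smul_smul, mul_assoc, ← pow_add, Nat.sub_add_cancel (by omega : ℓ - j ≤ k)]

lemma pk_ann (hmax : IsLocalRing.maximalIdeal Λ = Ideal.span {p}) (hlen : p ^ n = 0)
    {b : M} {ℓ : ℕ} (hb : p ^ (ℓ - 1) • b ≠ 0) (hbl : p ^ ℓ • b = 0)
    (r : Λ) : r • b = 0 ↔ r ∈ Ideal.span {p ^ ℓ} := by
  constructor
  · intro h
    rcases pk_cases hmax hlen r with rfl | ⟨u, k, hu, hk, rfl⟩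
    · exact zero_mem _
    · have hpk : p ^ k • b = 0 := by
        rw [mul_smul] at h
        exact (hu.smul_eq_zero).mp h
      have hkℓ : ℓ ≤ k := by
        by_contra hlt
        push_neg at hlt
        apply hb
        have heq : p ^ (ℓ - 1) • b = p ^ (ℓ - 1 - k) • (p ^ k • b) := by
          rw [smul_smul, ← pow_add, Nat.sub_add_cancel (by omega : k ≤ ℓ - 1)]
        rw [heq, hpk, smul_zero]
      exact Ideal.mem_span_singleton.mpr ⟨u * p ^ (k - ℓ), by
        rw [← mul_assoc, mul_comm (p ^ ℓ) u, mul_assoc, ← pow_add,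
          Nat.add_sub_cancel' hkℓ]⟩
  · intro h
    obtain ⟨c, hc⟩ := Ideal.mem_span_singleton'.mp h
    rw [← hc, mul_smul, hbl, smul_zero]

omit [IsLocalRing Λ] in
lemma pk_exponent (hlen : p ^ n = 0) [Module.Finite Λ M] :
    ∃ ℓ, ℓ ≤ n ∧ (∀ x : M, p ^ ℓ • x = 0) ∧ (ℓ = 0 ∨ ∃ b : M, p ^ (ℓ - 1) • b ≠ 0) := by
  classical
  obtain ⟨t, ht⟩ := Module.Finite.fg_top (R := Λ) (M := M)
  have hword : ∀ x : M, ∃ k, p ^ k • x = 0 := fun x => ⟨n, by rw [hlen, zero_smul]⟩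
  set ord : M → ℕ := fun x => Nat.find (hword x) with hord
  set ℓ := t.sup ord with hℓ
  have hmono : ∀ (x : M) (k : ℕ), ord x ≤ k → p ^ k • x = 0 := by
    intro x k hk
    have h0 : p ^ ord x • x = 0 := Nat.find_spec (hword x)
    calc p ^ k • x = p ^ (k - ord x) • (p ^ ord x • x) := by
          rw [smul_smul, ← pow_add, Nat.sub_add_cancel hk]
      _ = 0 := by rw [h0, smul_zero]
  refine ⟨ℓ, ?_, ?_, ?_⟩
  · exact Finset.sup_le fun g _ => Nat.find_le (by rw [hlen, zero_smul])
  · intro x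
    have hx : x ∈ Submodule.span Λ (t : Set M) := by rw [ht]; trivial
    induction hx using Submodule.span_induction with
    | mem y hyt => exact hmono y ℓ (Finset.le_sup hyt)
    | zero => rw [smul_zero]
    | add y z _ _ hy hz => rw [smul_add, hy, hz, add_zero]
    | smul r y _ hy => rw [smul_comm, hy, smul_zero]
  · rcases Nat.eq_zero_or_pos ℓ with h0 | hpos
    · exact Or.inl h0
    right
    have htne : t.Nonempty := by
      by_contra hne
      rw [Finset.not_nonempty_iff_eq_empty] at hne
      rw [hne] at hℓ
      simp at hℓ
      omega
    obtain ⟨g, hgt, hg⟩ := Finset.exists_mem_eq_sup t htne ord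
    refine ⟨g, Nat.find_min (hword g) ?_⟩
    show ℓ - 1 < ord g
    rw [← hg]
    omega

omit [IsLocalRing Λ] in
lemma pk_zorn (V T C₀ : Submodule Λ M) (h0 : C₀ ≤ T) (hd : C₀ ⊓ V = ⊥) :
    ∃ C, C₀ ≤ C ∧ C ≤ T ∧ C ⊓ V = ⊥ ∧
      ∀ D, D ≤ T → D ⊓ V = ⊥ → C ≤ D → D = C := by
  have hub : ∀ c ⊆ {D : Submodule Λ M | D ≤ T ∧ D ⊓ V = ⊥},
      IsChain (· ≤ ·) c → ∀ y ∈ c, ∃ ub ∈ {D : Submodule Λ M | D ≤ T ∧ D ⊓ V = ⊥},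
        ∀ z ∈ c, z ≤ ub := by
    intro c hcs hchain y hy
    refine ⟨sSup c, ⟨sSup_le fun D hD => (hcs hD).1, ?_⟩, fun z hz => le_sSup hz⟩
    rw [eq_bot_iff]
    rintro x ⟨hx1, hx2⟩
    obtain ⟨D, hDc, hxD⟩ := (Submodule.mem_sSup_of_directed ⟨y, hy⟩ hchain.directedOn).mp hx1
    have h2 := (hcs hDc).2
    rw [eq_bot_iff] at h2
    exact h2 ⟨hxD, hx2⟩
  obtain ⟨C, hC0, hCmax⟩ := zorn_le_nonempty₀
    {D : Submodule Λ M | D ≤ T ∧ D ⊓ V = ⊥} hub C₀ ⟨h0, hd⟩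
  exact ⟨C, hC0, hCmax.prop.1, hCmax.prop.2,
    fun D h1 h2 h3 => hCmax.eq_of_ge ⟨h1, h2⟩ h3⟩

lemma pk_compl (hmax : IsLocalRing.maximalIdeal Λ = Ideal.span {p}) (hlen : p ^ n = 0)
    {ℓ : ℕ} (hkill : ∀ x : M, p ^ ℓ • x = 0) {b : M} (hbord : p ^ (ℓ - 1) • b ≠ 0)
    (hpos : 1 ≤ ℓ)
    (C : Submodule Λ M) (hd : C ⊓ span Λ {b} = ⊥)
    (hCmax : ∀ D, D ≤ ⊤ → D ⊓ span Λ {b} = ⊥ → C ≤ D → D = C) :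
    span Λ {b} ⊔ C = ⊤ := by
  by_contra hne
  have hex : ∃ w : M, w ∉ span Λ {b} ⊔ C := by
    by_contra hall
    push_neg at hall
    exact hne (eq_top_iff.mpr fun z _ => hall z)
  obtain ⟨w, hw⟩ := hex
  set U := span Λ {b} ⊔ C with hU
  have hUw : ∃ k, p ^ k • w ∈ U := ⟨ℓ, by rw [hkill]; exact zero_mem U⟩
  classical
  set k₀ := Nat.find hUw with hk₀
  have hk₀pos : 1 ≤ k₀ := by
    rcases Nat.eq_zero_or_pos k₀ with h0 | h
    · exfalso
      have hspec := Nat.find_spec hUw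
      rw [← hk₀, h0, pow_zero, one_smul] at hspec
      exact hw hspec
    · exact h
  set x' := p ^ (k₀ - 1) • w with hx'
  have hx'U : x' ∉ U := Nat.find_min hUw (by omega)
  have hpx' : p • x' ∈ U := by
    have heq : p • x' = p ^ k₀ • w := by
      rw [hx', smul_smul, ← pow_succ']
      congr 2
      omega
    rw [heq]
    exact Nat.find_spec hUw
  rw [hU] at hpx'
  obtain ⟨sb, hsb, c, hc, hsum⟩ := Submodule.mem_sup.mp hpx'
  obtain ⟨s, rfl⟩ := Submodule.mem_span_singleton.mp hsb
  have hkey : p ^ (ℓ - 1) • (s • b) = 0 := by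
    have h1 : p ^ (ℓ - 1) • (s • b) + p ^ (ℓ - 1) • c = 0 := by
      rw [← smul_add, hsum]
      rw [smul_smul, ← pow_succ, Nat.sub_add_cancel hpos]
      exact hkill x'
    have h2 : p ^ (ℓ - 1) • (s • b) ∈ C ⊓ span Λ {b} := by
      constructor
      · have heq3 : p ^ (ℓ - 1) • (s • b) = -(p ^ (ℓ - 1) • c) := by
          rw [eq_neg_iff_add_eq_zero]; exact h1
        rw [heq3]
        exact neg_mem (C.smul_mem _ hc)
      · exact Submodule.smul_mem _ _ (Submodule.smul_mem _ _ (mem_span_singleton_self b))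
    rw [hd] at h2
    exact h2
  have hsnu : s ∈ Ideal.span {p} := by
    by_contra hsu
    have hu := pk_unit hmax hsu
    apply hbord
    rw [smul_comm] at hkey
    exact (hu.smul_eq_zero).mp hkey
  obtain ⟨t, ht⟩ := Ideal.mem_span_singleton'.mp hsnu
  set x'' := x' - t • b with hx''
  have hx''U : x'' ∉ U := by
    intro hmem
    apply hx'U
    have heq4 : x' = x'' + t • b := by rw [hx'']; abel
    rw [heq4]
    exact add_mem hmem (le_sup_left (a := span Λ {b}) (b := C)
      (Submodule.smul_mem _ _ (mem_span_singleton_self b)))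
  have hpx'' : p • x'' ∈ C := by
    have heq5 : p • x'' = c := by
      rw [hx'', smul_sub]
      have h3 : p • t • b = s • b := by rw [smul_smul, ← ht, mul_comm]
      rw [h3, ← hsum]
      abel
    rw [heq5]
    exact hc
  have hD : (C ⊔ span Λ {x''}) ⊓ span Λ {b} = ⊥ := by
    rw [eq_bot_iff]
    rintro z ⟨hz1, hz2⟩
    obtain ⟨c', hc', w', hw', hsum'⟩ := Submodule.mem_sup.mp hz1
    obtain ⟨r, rfl⟩ := Submodule.mem_span_singleton.mp hw'
    rcases pk_cases hmax hlen r with rfl | ⟨u, j, hu, hj, rfl⟩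
    · rw [zero_smul, add_zero] at hsum'
      rw [← hsum'] at hz2 ⊢
      have h4 : c' ∈ C ⊓ span Λ {b} := ⟨hc', hz2⟩
      rw [hd] at h4
      exact h4
    · rcases Nat.eq_zero_or_pos j with hj0 | hjpos
      · exfalso
        apply hx''U
        have hux : (u * p ^ j) • x'' = z - c' := by rw [← hsum']; abel
        obtain ⟨v, hv⟩ := pk_smul_unit (by rw [hj0, pow_zero, mul_one]; exact hu) hux
        rw [hv]
        refine Submodule.smul_mem _ _ (sub_mem ?_ ?_)
        · exact le_sup_left (a := span Λ {b}) (b := C) hz2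
        · exact le_sup_right (a := span Λ {b}) (b := C) hc'
      · have hrx : (u * p ^ j) • x'' ∈ C := by
          have heq6 : (u * p ^ j) • x'' = (u * p ^ (j - 1)) • (p • x'') := by
            rw [smul_smul, mul_assoc, ← pow_succ, Nat.sub_add_cancel hjpos]
          rw [heq6]
          exact C.smul_mem _ hpx''
        have h5 : z ∈ C ⊓ span Λ {b} := ⟨by rw [← hsum']; exact add_mem hc' hrx, hz2⟩
        rw [hd] at h5
        exact h5
  have heq7 := hCmax (C ⊔ span Λ {x''}) le_top hD le_sup_left
  apply hx''U
  have h6 : x'' ∈ C ⊔ span Λ {x''} :=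
    le_sup_right (a := C) (Submodule.mem_span_singleton_self x'')
  rw [heq7] at h6
  exact le_sup_right (a := span Λ {b}) h6

def pkExt {s' : ℕ} (a : ℕ) (f : Fin s' → ℕ) : Fin (s' + 1) → ℕ := Fin.cons a f

def pkCons {s' : ℕ} (V : Fin (s' + 1) → Type) [∀ i, AddCommGroup (V i)]
    [∀ i, Module Λ (V i)] :
    ((V 0) × ((i : Fin s') → V i.succ)) ≃ₗ[Λ] ((i : Fin (s' + 1)) → V i) where
  toFun z := Fin.cases z.1 z.2
  map_add' z w := by
    funext i
    induction i using Fin.cases <;> simp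
  map_smul' r z := by
    funext i
    induction i using Fin.cases <;> simp
  invFun f := (f 0, fun i => f i.succ)
  left_inv z := by
    refine Prod.ext ?_ (funext fun i => ?_) <;> simp
  right_inv f := by
    funext i
    induction i using Fin.cases <;> simp

end PicketHelpers

section PicketMain

variable {Λ : Type} [CommRing Λ] [IsLocalRing Λ] {p : Λ} {n : ℕ}

set_option maxHeartbeats 2000000 in
lemma pk_main (hmax : IsLocalRing.maximalIdeal Λ = Ideal.span {p}) (hlen : p ^ n = 0)
    (B : Type) [AddCommGroup B] [Module Λ B] [IsNoetherian Λ B] [IsArtinian Λ B]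
    (N : Submodule Λ B) :
    ∀ A : Submodule Λ ↥N,
      (∀ a : ↥N, a ∈ A → p ^ 2 • a = 0) →
      (∀ x : ↥N, p • x = 0 → x ∈ A) →
      ∃ (s : ℕ) (ℓv : Fin s → ℕ) (mv : Fin s → ℕ),
        (∀ i, 1 ≤ mv i ∧ mv i ≤ 2 ∧ mv i ≤ ℓv i ∧ ℓv i ≤ n) ∧
        ∃ e : ↥N ≃ₗ[Λ] ((i : Fin s) → Λ ⧸ Ideal.span {p ^ ℓv i}),
          ∀ x : ↥N, x ∈ A ↔ ∀ i, e x i ∈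
            Submodule.span Λ {Ideal.Quotient.mk (Ideal.span {p ^ ℓv i}) (p ^ (ℓv i - mv i))} := by
  induction N using WellFoundedLT.induction with
  | _ N IH =>
  intro A hA2 hsocN
  classical
  haveI : Module.Finite Λ ↥N := Module.Finite.iff_fg.mpr (IsNoetherian.noetherian N)
  obtain ⟨ℓ, hℓn, hkill, hcase0⟩ := pk_exponent (M := ↥N) hlen
  rcases Nat.eq_zero_or_pos ℓ with hℓ0 | hℓpos
  · -- trivial module
    have htriv : ∀ x : ↥N, x = 0 := fun x => by
      have := hkill x
      rwa [hℓ0, pow_zero, one_smul] at this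
    refine ⟨0, Fin.elim0, Fin.elim0, fun i => i.elim0,
      LinearEquiv.ofLinear 0 0 (by ext f i; exact i.elim0) (by
        ext x
        rw [htriv x]
        simp), fun x => ?_⟩
    exact ⟨fun _ i => i.elim0, fun _ => by rw [htriv x]; exact A.zero_mem⟩
  -- nontrivial
  obtain ⟨b₀, hb₀⟩ := hcase0.resolve_left (by omega)
  obtain ⟨mval, hm1, hm2, hmℓ, b, hbord, C, hdisj, hcodis, hcap, hsplit⟩ :
      ∃ mval, 1 ≤ mval ∧ mval ≤ 2 ∧ mval ≤ ℓ ∧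
      ∃ b : ↥N, p ^ (ℓ - 1) • b ≠ 0 ∧
      ∃ C : Submodule Λ ↥N, C ⊓ span Λ {b} = ⊥ ∧ span Λ {b} ⊔ C = ⊤ ∧
        A ⊓ span Λ {b} = span Λ {p ^ (ℓ - mval) • b} ∧
        A ≤ span Λ {p ^ (ℓ - mval) • b} ⊔ (A ⊓ C) := by
    by_cases hcase : ∃ a, a ∈ A ∧ p • a ≠ 0 ∧ ∃ y : ↥N, p • a = p ^ (ℓ - 1) • y
    · -- CASE (i) : m = 2
      obtain ⟨a, haA, hpa0, y, hpay⟩ := hcase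
      have hℓ2 : 2 ≤ ℓ := by
        by_contra hcon
        have hℓ1 : ℓ = 1 := by omega
        apply hpa0
        have hk := hkill a
        rwa [hℓ1, pow_one] at hk
      have hbord : p ^ (ℓ - 1) • y ≠ 0 := by rw [← hpay]; exact hpa0
      have hbA : p ^ (ℓ - 2) • y ∈ A := by
        have hker : p • (a - p ^ (ℓ - 2) • y) = 0 := by
          rw [smul_sub, smul_smul, ← pow_succ', (by omega : ℓ - 2 + 1 = ℓ - 1), ← hpay,
            sub_self]
        have hmem := hsocN _ hker
        have heq : p ^ (ℓ - 2) • y = a - (a - p ^ (ℓ - 2) • y) := (sub_sub_cancel _ _).symm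
        rw [heq]
        exact A.sub_mem haA hmem
      obtain ⟨C, -, -, hdisj, hCmax⟩ := pk_zorn (M := ↥N) (span Λ {y}) ⊤ ⊥ bot_le
        (by rw [bot_inf_eq])
      have hcodis := pk_compl hmax hlen hkill hbord (by omega) C hdisj hCmax
      have hcap : A ⊓ span Λ {y} = span Λ {p ^ (ℓ - 2) • y} := by
        apply le_antisymm
        · rintro z ⟨hzA, hzb⟩
          obtain ⟨r, rfl⟩ := mem_span_singleton.mp hzb
          exact pk_le_span hmax hlen hbord (hA2 _ hzA) (by omega)
        · rw [span_le, Set.singleton_subset_iff]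
          exact ⟨hbA, Submodule.smul_mem _ _ (mem_span_singleton_self y)⟩
      refine ⟨2, by omega, le_refl 2, hℓ2, y, hbord, C, hdisj, hcodis, hcap, ?_⟩
      intro a' ha'
      have ha'top : a' ∈ span Λ {y} ⊔ C := by rw [hcodis]; trivial
      obtain ⟨sb, hsb, c, hcC, hsum⟩ := mem_sup.mp ha'top
      obtain ⟨s, rfl⟩ := mem_span_singleton.mp hsb
      have hsbA : s • y ∈ span Λ {p ^ (ℓ - 2) • y} := by
        refine pk_le_span hmax hlen hbord ?_ (by omega)
        have h1 : p ^ 2 • (s • y) + p ^ 2 • c = 0 := by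
          rw [← smul_add, hsum]; exact hA2 a' ha'
        have h2 : p ^ 2 • (s • y) ∈ C ⊓ span Λ {y} := by
          constructor
          · have heq : p ^ 2 • (s • y) = -(p ^ 2 • c) := by
              rw [eq_neg_iff_add_eq_zero]; exact h1
            rw [heq]
            exact neg_mem (C.smul_mem _ hcC)
          · exact Submodule.smul_mem _ _ (Submodule.smul_mem _ _ (mem_span_singleton_self y))
        rw [hdisj] at h2
        exact h2
      have hsyA : s • y ∈ A := by
        have hmem : s • y ∈ A ⊓ span Λ {y} := by rw [hcap]; exact hsbA
        exact hmem.1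
      refine mem_sup.mpr ⟨s • y, hsbA, c, ⟨?_, hcC⟩, hsum⟩
      have heqc : c = a' - s • y := by rw [← hsum]; abel
      rw [heqc]
      exact A.sub_mem ha' hsyA
    · -- CASE (ii) : m = 1
      push_neg at hcase
      have hx0 : p • (p ^ (ℓ - 1) • b₀) = 0 := by
        rw [smul_smul, ← pow_succ', (by omega : ℓ - 1 + 1 = ℓ)]
        exact hkill b₀
      have hxA : p ^ (ℓ - 1) • b₀ ∈ A := hsocN _ hx0
      have hxnP : ¬ ∃ a, a ∈ A ∧ p • a = p ^ (ℓ - 1) • b₀ := by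
        rintro ⟨a, haA, hpa⟩
        exact hcase a haA (hpa ▸ hb₀) b₀ hpa
      set P := A.map ((LinearMap.lsmul Λ ↥N) p) with hP
      have hPmem : ∀ z : ↥N, z ∈ P ↔ ∃ a, a ∈ A ∧ p • a = z := by
        intro z
        simp [hP, Submodule.mem_map, LinearMap.lsmul_apply]
      have hPA : P ≤ A := by
        intro z hz
        obtain ⟨a, haA, rfl⟩ := (hPmem z).mp hz
        exact A.smul_mem p haA
      have hPx : P ⊓ span Λ {p ^ (ℓ - 1) • b₀} = ⊥ := by
        rw [eq_bot_iff]
        rintro z ⟨hzP, hzx⟩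
        obtain ⟨r, rfl⟩ := mem_span_singleton.mp hzx
        rcases pk_cases hmax hlen r with rfl | ⟨u, k, hu, hk, rfl⟩
        · rw [zero_smul]; exact zero_mem _
        · rcases Nat.eq_zero_or_pos k with hk0 | hkpos
          · exfalso
            apply hxnP
            have hu' : IsUnit (u * p ^ k) := by rw [hk0, pow_zero, mul_one]; exact hu
            obtain ⟨v, hv⟩ := pk_smul_unit hu' (rfl :
              (u * p ^ k) • (p ^ (ℓ - 1) • b₀) = (u * p ^ k) • (p ^ (ℓ - 1) • b₀))
            have hxP : p ^ (ℓ - 1) • b₀ ∈ P := by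
              rw [hv]
              exact P.smul_mem v hzP
            exact (hPmem _).mp hxP
          · have hpk' : p * p ^ (k - 1) = p ^ k := by
              rw [← pow_succ', Nat.sub_add_cancel hkpos]
            have heq : (u * p ^ k) • (p ^ (ℓ - 1) • b₀)
                = (u * p ^ (k - 1)) • (p • (p ^ (ℓ - 1) • b₀)) := by
              rw [smul_smul, smul_smul, smul_smul]
              congr 1
              rw [← hpk']
              ring
            rw [heq, hx0, smul_zero]
            exact zero_mem _
      obtain ⟨C₀, hPC₀, hC₀A, hC₀x, hC₀max⟩ :=
        pk_zorn (span Λ {p ^ (ℓ - 1) • b₀}) A P hPA hPx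
      have hAsub : A ≤ span Λ {p ^ (ℓ - 1) • b₀} ⊔ C₀ := by
        by_contra hnle
        obtain ⟨y, hyA, hyU⟩ := SetLike.not_le_iff_exists.mp hnle
        have hD' : (C₀ ⊔ span Λ {y}) ⊓ span Λ {p ^ (ℓ - 1) • b₀} = ⊥ := by
          rw [eq_bot_iff]
          rintro z ⟨hz1, hz2⟩
          obtain ⟨c', hc', w', hw', hsum'⟩ := mem_sup.mp hz1
          obtain ⟨r, rfl⟩ := mem_span_singleton.mp hw'
          rcases pk_cases hmax hlen r with rfl | ⟨u, k, hu, hk, rfl⟩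
          · rw [zero_smul, add_zero] at hsum'
            rw [← hsum'] at hz2 ⊢
            have h4 : c' ∈ C₀ ⊓ span Λ {p ^ (ℓ - 1) • b₀} := ⟨hc', hz2⟩
            rw [hC₀x] at h4
            exact h4
          · rcases Nat.eq_zero_or_pos k with hk0 | hkpos
            · exfalso
              apply hyU
              have hu' : IsUnit (u * p ^ k) := by rw [hk0, pow_zero, mul_one]; exact hu
              have hux : (u * p ^ k) • y = z - c' := by rw [← hsum']; abel
              obtain ⟨v, hv⟩ := pk_smul_unit hu' hux
              rw [hv]
              refine Submodule.smul_mem _ _ (sub_mem ?_ ?_)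
              · exact le_sup_left (a := span Λ {p ^ (ℓ - 1) • b₀}) (b := C₀) hz2
              · exact le_sup_right (a := span Λ {p ^ (ℓ - 1) • b₀}) (b := C₀) hc'
            · have hry : (u * p ^ k) • y ∈ C₀ := by
                have hpk' : p * p ^ (k - 1) = p ^ k := by
                  rw [← pow_succ', Nat.sub_add_cancel hkpos]
                have heq : (u * p ^ k) • y = (u * p ^ (k - 1)) • (p • y) := by
                  rw [smul_smul]
                  congr 1
                  rw [← hpk']
                  ring
                have hpy : p • y ∈ P := (hPmem _).mpr ⟨y, hyA, rfl⟩
                rw [heq]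
                exact C₀.smul_mem _ (hPC₀ hpy)
              have h5 : z ∈ C₀ ⊓ span Λ {p ^ (ℓ - 1) • b₀} :=
                ⟨by rw [← hsum']; exact add_mem hc' hry, hz2⟩
              rw [hC₀x] at h5
              exact h5
        have hD'A : C₀ ⊔ span Λ {y} ≤ A :=
          sup_le hC₀A ((span_le).mpr (Set.singleton_subset_iff.mpr hyA))
        have heqD := hC₀max _ hD'A hD' le_sup_left
        apply hyU
        have h6 : y ∈ C₀ ⊔ span Λ {y} :=
          le_sup_right (a := C₀) (mem_span_singleton_self y)
        rw [heqD] at h6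
        exact le_sup_right (a := span Λ {p ^ (ℓ - 1) • b₀}) h6
      have hcap : A ⊓ span Λ {b₀} = span Λ {p ^ (ℓ - 1) • b₀} := by
        apply le_antisymm
        · rintro z ⟨hzA, hzb⟩
          obtain ⟨r, rfl⟩ := mem_span_singleton.mp hzb
          rcases Nat.lt_or_ge ℓ 2 with hℓ1 | hℓ2
          · have hℓe : ℓ = 1 := by omega
            refine mem_span_singleton.mpr ⟨r, ?_⟩
            rw [hℓe]
            norm_num
          · have hz2 : r • b₀ ∈ span Λ {p ^ (ℓ - 2) • b₀} :=
              pk_le_span hmax hlen hb₀ (hA2 _ hzA) (by omega)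
            obtain ⟨t, hty⟩ := mem_span_singleton.mp hz2
            rcases pk_cases hmax hlen t with rfl | ⟨u, k, hu, hk, rfl⟩
            · rw [← hty, zero_smul]
              exact zero_mem _
            · rcases Nat.eq_zero_or_pos k with hk0 | hkpos
              · exfalso
                have hu' : IsUnit (u * p ^ k) := by rw [hk0, pow_zero, mul_one]; exact hu
                have haA' : r • b₀ ∈ A := hzA
                have hppow : p * p ^ (ℓ - 2) = p ^ (ℓ - 1) := by
                  rw [← pow_succ', (by omega : ℓ - 2 + 1 = ℓ - 1)]
                have hpa : p • (r • b₀) = p ^ (ℓ - 1) • ((u * p ^ k) • b₀) := by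
                  rw [← hty, smul_smul, smul_smul, smul_smul]
                  congr 1
                  rw [← hppow]
                  ring
                have hpane : p • (r • b₀) ≠ 0 := by
                  rw [hpa]
                  intro hzero
                  rw [smul_comm] at hzero
                  exact hb₀ ((hu'.smul_eq_zero).mp hzero)
                exact hcase _ haA' hpane _ hpa
              · refine mem_span_singleton.mpr ⟨u * p ^ (k - 1), ?_⟩
                rw [← hty, smul_smul, smul_smul, mul_assoc, mul_assoc, ← pow_add, ← pow_add,
                  (show k - 1 + (ℓ - 1) = k + (ℓ - 2) by omega)]
        · rw [span_le, Set.singleton_subset_iff]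
          exact ⟨hxA, Submodule.smul_mem _ _ (mem_span_singleton_self b₀)⟩
      have hC₀b : C₀ ⊓ span Λ {b₀} = ⊥ := by
        rw [eq_bot_iff]
        rintro z ⟨hz0, hzb⟩
        have hzx : z ∈ span Λ {p ^ (ℓ - 1) • b₀} := by
          have hmem : z ∈ A ⊓ span Λ {b₀} := ⟨hC₀A hz0, hzb⟩
          rwa [hcap] at hmem
        have hmem2 : z ∈ C₀ ⊓ span Λ {p ^ (ℓ - 1) • b₀} := ⟨hz0, hzx⟩
        rwa [hC₀x] at hmem2
      obtain ⟨C, hC₀C, -, hdisj, hCmax⟩ := pk_zorn (span Λ {b₀}) ⊤ C₀ le_top hC₀b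
      have hcodis := pk_compl hmax hlen hkill hb₀ hℓpos C hdisj hCmax
      refine ⟨1, le_refl 1, by omega, hℓpos, b₀, hb₀, C, hdisj, hcodis, hcap, ?_⟩
      refine le_trans hAsub (sup_le_sup_left ?_ _)
      exact le_inf hC₀A hC₀C
  -- COMMON TAIL
  have hbne : b ≠ 0 := fun h => hbord (by rw [h, smul_zero])
  have hspanA : span Λ {p ^ (ℓ - mval) • b} ≤ A := by
    rw [← hcap]; exact inf_le_left
  have hcompl : IsCompl (span Λ {b}) C :=
    ⟨disjoint_iff.mpr (by rw [inf_comm]; exact hdisj), codisjoint_iff.mpr hcodis⟩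
  have hker : LinearMap.ker (LinearMap.toSpanSingleton Λ ↥N b) = Ideal.span {p ^ ℓ} := by
    ext r
    rw [LinearMap.mem_ker, LinearMap.toSpanSingleton_apply]
    exact pk_ann hmax hlen hbord (hkill b) r
  obtain ⟨e₁, he₁⟩ : ∃ e₁ : (Λ ⧸ Ideal.span {p ^ ℓ}) ≃ₗ[Λ] ↥(span Λ {b}),
      ∀ r : Λ, ((e₁ (Ideal.Quotient.mk (Ideal.span {p ^ ℓ}) r)) : ↥N) = r • b :=
    ⟨(Submodule.quotEquivOfEq _ _ hker.symm).trans
      ((LinearMap.toSpanSingleton Λ ↥N b).quotKerEquivRange.trans (LinearEquiv.ofEq _ _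
        (LinearMap.span_singleton_eq_range Λ ↥N b).symm)), fun r => rfl⟩
  -- recursion on the complement
  set C' := C.map N.subtype with hC'def
  have hC'N : C' ≤ N := map_subtype_le N C
  have hbC : b ∉ C := by
    intro hbCmem
    have hmem : b ∈ C ⊓ span Λ {b} := ⟨hbCmem, mem_span_singleton_self b⟩
    rw [hdisj] at hmem
    exact hbne ((Submodule.mem_bot Λ).mp hmem)
  have hC'ne : C' ≠ N := by
    intro h
    apply hbC
    have hb' : (b : B) ∈ C' := by rw [h]; exact b.2
    obtain ⟨c, hcC, hc⟩ := hb'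
    have heqc : c = b := Subtype.ext hc
    rwa [heqc] at hcC
  have hC'lt : C' < N := lt_of_le_of_ne hC'N hC'ne
  obtain ⟨eC, heC⟩ : ∃ eC : ↥C ≃ₗ[Λ] ↥C', ∀ z : ↥C, ((eC z : ↥C') : B) = ((z : ↥N) : B) :=
    ⟨Submodule.equivMapOfInjective N.subtype N.injective_subtype C, fun z => rfl⟩
  set AC := (A ⊓ C).comap C.subtype with hACdef
  set A₂ := AC.map (eC : ↥C →ₗ[Λ] ↥C') with hA₂def
  have hA₂mem : ∀ z : ↥C', z ∈ A₂ ↔ eC.symm z ∈ AC := by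
    intro z
    rw [hA₂def]
    exact Submodule.mem_map_equiv _
  have hsymmval : ∀ z : ↥C', (((eC.symm z : ↥C) : ↥N) : B) = (z : B) := by
    intro z
    rw [← heC (eC.symm z), eC.apply_symm_apply]
  have hcond1 : ∀ a₂ : ↥C', a₂ ∈ A₂ → p ^ 2 • a₂ = 0 := by
    intro a₂ ha₂
    have hmem := (hA₂mem a₂).mp ha₂
    rw [hACdef, Submodule.mem_comap] at hmem
    have hz := hA2 _ hmem.1
    apply Subtype.ext
    show p ^ 2 • (a₂ : B) = 0
    rw [← hsymmval a₂]
    exact congrArg Subtype.val hz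
  have hcond2 : ∀ z : ↥C', p • z = 0 → z ∈ A₂ := by
    intro z hz
    have hpw : p • ((eC.symm z : ↥C) : ↥N) = 0 := by
      apply Subtype.ext
      show p • (((eC.symm z : ↥C) : ↥N) : B) = 0
      rw [hsymmval z]
      exact congrArg Subtype.val hz
    have hwA : ((eC.symm z : ↥C) : ↥N) ∈ A := hsocN _ hpw
    refine (hA₂mem z).mpr ?_
    rw [hACdef, Submodule.mem_comap]
    exact ⟨hwA, (eC.symm z).2⟩
  obtain ⟨s', ℓ', m', hbounds', e', hiff'⟩ := IH C' hC'lt A₂ hcond1 hcond2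
  -- assemble
  obtain ⟨eP, heP⟩ : ∃ eP : (↥(span Λ {b}) × ↥C) ≃ₗ[Λ] ↥N,
      ∀ z, eP z = (z.1 : ↥N) + (z.2 : ↥N) :=
    ⟨Submodule.prodEquivOfIsCompl _ _ hcompl, fun z => rfl⟩
  refine ⟨s' + 1, pkExt ℓ ℓ', pkExt mval m', ?_, ?_⟩
  · intro i
    induction i using Fin.cases with
    | zero => exact ⟨hm1, hm2, hmℓ, hℓn⟩
    | succ j => exact hbounds' j
  obtain ⟨e, he0, heS⟩ : ∃ e : ↥N ≃ₗ[Λ]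
        ((i : Fin (s' + 1)) → Λ ⧸ Ideal.span {p ^ pkExt ℓ ℓ' i}),
      (∀ x : ↥N, e x 0 = e₁.symm (eP.symm x).1) ∧
      (∀ (x : ↥N) (i : Fin s'), e x i.succ = e' (eC (eP.symm x).2) i) :=
    ⟨(eP.symm.trans (e₁.symm.prodCongr (eC.trans e'))).trans
      (pkCons (fun i => Λ ⧸ Ideal.span {p ^ pkExt ℓ ℓ' i})),
      fun x => rfl, fun x i => rfl⟩
  refine ⟨e, ?_⟩
  intro x
  have hxw : (((eP.symm x).1 : ↥N)) + (((eP.symm x).2 : ↥N)) = x := by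
    rw [← heP (eP.symm x), eP.apply_symm_apply]
  constructor
  · intro hxA
    obtain ⟨y, hy, z, hzAC, hyz⟩ := mem_sup.mp (hsplit hxA)
    have hyb : y ∈ span Λ {b} := by
      obtain ⟨t, rfl⟩ := mem_span_singleton.mp hy
      rw [smul_smul]
      exact mem_span_singleton.mpr ⟨t * p ^ (ℓ - mval), rfl⟩
    have hw12 : (((eP.symm x).1 : ↥N)) = y ∧ (((eP.symm x).2 : ↥N)) = z := by
      have hdiff : ((eP.symm x).1 : ↥N) - y = z - ((eP.symm x).2 : ↥N) := by
        have hsum2 : ((eP.symm x).1 : ↥N) + ((eP.symm x).2 : ↥N) = y + z := by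
          rw [hxw, hyz]
        rw [sub_eq_sub_iff_add_eq_add, hsum2, add_comm]
      have hmem1 : ((eP.symm x).1 : ↥N) - y ∈ span Λ {b} := sub_mem (eP.symm x).1.2 hyb
      have hmem2 : ((eP.symm x).1 : ↥N) - y ∈ C := by
        rw [hdiff]
        exact sub_mem hzAC.2 (eP.symm x).2.2
      have hmem3 : ((eP.symm x).1 : ↥N) - y ∈ C ⊓ span Λ {b} := ⟨hmem2, hmem1⟩
      rw [hdisj] at hmem3
      have h5 : ((eP.symm x).1 : ↥N) = y := by
        have h6 := (Submodule.mem_bot Λ).mp hmem3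
        rwa [sub_eq_zero] at h6
      refine ⟨h5, ?_⟩
      rw [h5, sub_self] at hdiff
      exact (sub_eq_zero.mp hdiff.symm).symm
    intro i
    induction i using Fin.cases with
    | zero =>
      rw [he0 x]
      show e₁.symm (eP.symm x).1 ∈
        span Λ {Ideal.Quotient.mk (Ideal.span {p ^ ℓ}) (p ^ (ℓ - mval))}
      obtain ⟨t, hty⟩ := mem_span_singleton.mp hy
      have hw1val : ((eP.symm x).1 : ↥N) = (t * p ^ (ℓ - mval)) • b := by
        rw [hw12.1, ← hty, smul_smul]
      have happ1 : e₁ (Ideal.Quotient.mk (Ideal.span {p ^ ℓ}) (t * p ^ (ℓ - mval)))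
          = (eP.symm x).1 := by
        apply Subtype.ext
        rw [he₁]
        exact hw1val.symm
      rw [← happ1, LinearEquiv.symm_apply_apply]
      exact mem_span_singleton.mpr ⟨t, rfl⟩
    | succ i =>
      rw [heS x i]
      show e' (eC (eP.symm x).2) i ∈
        span Λ {Ideal.Quotient.mk (Ideal.span {p ^ ℓ' i}) (p ^ (ℓ' i - m' i))}
      have hw2AC : (eP.symm x).2 ∈ AC := by
        rw [hACdef, Submodule.mem_comap]
        refine ⟨?_, (eP.symm x).2.2⟩
        show (((eP.symm x).2 : ↥N)) ∈ A
        rw [hw12.2]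
        exact hzAC.1
      have hw2A₂ : eC (eP.symm x).2 ∈ A₂ := by
        rw [hA₂def]
        exact ⟨(eP.symm x).2, hw2AC, rfl⟩
      exact (hiff' (eC (eP.symm x).2)).mp hw2A₂ i
  · intro h
    have hS : ∀ i : Fin s', e' (eC (eP.symm x).2) i ∈
        span Λ {Ideal.Quotient.mk (Ideal.span {p ^ ℓ' i}) (p ^ (ℓ' i - m' i))} := by
      intro i
      have hi := h i.succ
      rwa [heS x i] at hi
    have hw2A₂ : eC (eP.symm x).2 ∈ A₂ := (hiff' (eC (eP.symm x).2)).mpr hS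
    have hw2AC : (eP.symm x).2 ∈ AC := by
      have hmem := (hA₂mem (eC (eP.symm x).2)).mp hw2A₂
      rwa [eC.symm_apply_apply] at hmem
    have hw2A : (((eP.symm x).2 : ↥N)) ∈ A := by
      rw [hACdef, Submodule.mem_comap] at hw2AC
      exact hw2AC.1
    have h0 : e₁.symm (eP.symm x).1 ∈
        span Λ {Ideal.Quotient.mk (Ideal.span {p ^ ℓ}) (p ^ (ℓ - mval))} := by
      have hh := h 0
      rwa [he0 x] at hh
    obtain ⟨t, ht⟩ := mem_span_singleton.mp h0
    have hw1val : ((eP.symm x).1 : ↥N) = (t * p ^ (ℓ - mval)) • b := by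
      have happ2 : (eP.symm x).1
          = e₁ (t • Ideal.Quotient.mk (Ideal.span {p ^ ℓ}) (p ^ (ℓ - mval))) := by
        rw [ht, e₁.apply_symm_apply]
      have hmk : t • Ideal.Quotient.mk (Ideal.span {p ^ ℓ}) (p ^ (ℓ - mval))
          = Ideal.Quotient.mk (Ideal.span {p ^ ℓ}) (t * p ^ (ℓ - mval)) := rfl
      rw [happ2, hmk]
      exact he₁ _
    have hw1A : (((eP.symm x).1 : ↥N)) ∈ A := by
      apply hspanA
      rw [hw1val, mul_smul]
      exact mem_span_singleton.mpr ⟨t, rfl⟩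
    rw [← hxw]
    exact A.add_mem hw1A hw2A

end PicketMain

/-- Over a commutative local uniserial ring `Λ` of length `n`, every pair
`(B;A)` with `B` finitely generated, `p²A = 0` and `soc B ⊆ A` is a direct sum of
pickets `P^ℓ_m = (Λ/(p^ℓ); span (p^{ℓ−m}))` with `m ∈ {1,2}` and `m ≤ ℓ ≤ n`. -/
theorem picket_decomposition_socle_case
    (Λ : Type) [CommRing Λ] [IsLocalRing Λ] (p : Λ) (n : ℕ)
    (hmax : IsLocalRing.maximalIdeal Λ = Ideal.span {p})
    (huni : ∀ I J : Ideal Λ, I ≤ J ∨ J ≤ I)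
    (hlen : p ^ n = 0) (hlen' : p ^ (n - 1) ≠ 0)
    (B : Type) [AddCommGroup B] [Module Λ B] [Module.Finite Λ B]
    (A : Submodule Λ B) (hp2A : ∀ a ∈ A, p ^ 2 • a = 0)
    (hsoc : LinearMap.ker (LinearMap.lsmul Λ B p) ≤ A) :
    ∃ (s : ℕ) (ℓ : Fin s → ℕ) (m : Fin s → ℕ),
      (∀ i, 1 ≤ m i ∧ m i ≤ 2 ∧ m i ≤ ℓ i ∧ ℓ i ≤ n) ∧
      ∃ e : B ≃ₗ[Λ] ((i : Fin s) → Λ ⧸ Ideal.span {p ^ ℓ i}),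
        A.map (e : B →ₗ[Λ] ((i : Fin s) → Λ ⧸ Ideal.span {p ^ ℓ i}))
          = Submodule.pi Set.univ
              (fun i => Submodule.span Λ
                {Ideal.Quotient.mk (Ideal.span {p ^ ℓ i}) (p ^ (ℓ i - m i))}) := by
  classical
  haveI : Finite (Ideal Λ) := Finite.of_surjective
    (fun k : Fin (n + 1) => Ideal.span {p ^ (k : ℕ)})
    (fun I => by
      obtain ⟨k, hk, hI⟩ := pk_ideal hmax hlen I
      exact ⟨⟨k, by omega⟩, hI.symm⟩)
  haveI : IsNoetherianRing Λ := isNoetherian_mk Finite.to_wellFoundedGT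
  haveI : IsArtinianRing Λ := Finite.to_wellFoundedLT
  haveI : IsNoetherian Λ B := isNoetherian_of_isNoetherianRing_of_finite Λ B
  haveI : IsArtinian Λ B := isArtinian_of_fg_of_artinian'
  obtain ⟨s, ℓv, mv, hb, e, hiff⟩ := pk_main hmax hlen B ⊤
    (A.comap (⊤ : Submodule Λ B).subtype)
    (fun a ha => by
      apply Subtype.ext
      show p ^ 2 • (a : B) = 0
      exact hp2A _ ha)
    (fun x hx => by
      apply hsoc
      rw [LinearMap.mem_ker, LinearMap.lsmul_apply]
      exact congrArg Subtype.val hx)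
  refine ⟨s, ℓv, mv, hb, (Submodule.topEquiv (R := Λ) (M := B)).symm.trans e, ?_⟩
  ext y
  rw [Submodule.mem_map_equiv, Submodule.mem_pi]
  have hsymm : ((Submodule.topEquiv (R := Λ) (M := B)).symm.trans e).symm y
      = Submodule.topEquiv (e.symm y) := rfl
  rw [hsymm]
  have hmem : Submodule.topEquiv (e.symm y) ∈ A ↔ e.symm y ∈ A.comap (⊤ : Submodule Λ B).subtype := by
    rfl
  rw [hmem, hiff (e.symm y)]
  constructor
  · intro hall i _
    have := hall i
    rwa [e.apply_symm_apply] at this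
  · intro hall i
    rw [e.apply_symm_apply]
    exact hall i (Set.mem_univ i)
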